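/- (Lemma 7) Suppose the stacked system of linear equations H_i y = z_i, i = 1,…,n, has no solution, i.e., ∩_{i=1}^n E_i = ∅, while each E_i is nonempty. Then along the projection consensus recursion over the connected graph G with 0 < ε < 1/n and arbitrary initial values: (i) for each node i, the state x_i(t) converges to a finite limit y_i^* ∈ ℝ^d as t → ∞; and (ii) there exist at least two nodes j, k ∈ V with y_j^* ≠ y_k^*. -/

import Mathlib

noncomputable section

open Filter MeasureTheory Finset

/-- The integer (0-indexed) associated with a Boolean vector `x ∈ {0,1}^m`:
`⌊x⌋ - 1 = ∑_{k=1}^m x_k 2^{m-k}` (so the 1-indexed `⌊x⌋` is `flr m x + 1`). -/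
def flr (m : ℕ) (x : Fin m → Bool) : ℕ :=
  ∑ k : Fin m, if x k then 2 ^ (m - 1 - (k : ℕ)) else 0

/-- `deltaVec c i` is the `i`-th column of the `c × c` identity matrix (0-indexed). -/
def deltaVec (c : ℕ) (i : Fin c) : Fin c → ℝ := fun j => if j = i then 1 else 0

/-- `Δ_c`, the set of Boolean vectors in `ℝ^c`. -/
def DeltaSet (c : ℕ) : Set (Fin c → ℝ) := Set.range (deltaVec c)

/-- `Θ_m : {0,1}^m → Δ_{2^m}`, `Θ_m(x) = δ_{2^m}^{⌊x⌋}`. -/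
def theta (m : ℕ) (x : Fin m → Bool) : Fin (2 ^ m) → ℝ :=
  fun j => if (j : ℕ) = flr m x then 1 else 0

/-- `Υ_m : Δ_{2^m} → {0,1}^m`, the inverse of `Θ_m`. -/
def upsilon (m : ℕ) : (Fin (2 ^ m) → ℝ) → (Fin m → Bool) :=
  Function.invFun (theta m)

/-- Euclidean distance on `ℝ^N`. -/
def euclDist {N : ℕ} (x y : Fin N → ℝ) : ℝ := Real.sqrt (∑ j, (x j - y j) ^ 2)

/-- Euclidean distance from a point to a set in `ℝ^N`. -/
def distToSet {N : ℕ} (z : Fin N → ℝ) (S : Set (Fin N → ℝ)) : ℝ :=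
  sInf (euclDist z '' S)

/-- `P` is the (orthogonal/metric) projection onto the set `S ⊆ ℝ^N`: it maps every point to
a nearest point of `S` in the Euclidean distance. -/
def IsProjOn {N : ℕ} (P : (Fin N → ℝ) → (Fin N → ℝ)) (S : Set (Fin N → ℝ)) : Prop :=
  ∀ z, P z ∈ S ∧ ∀ w ∈ S, euclDist z (P z) ≤ euclDist z w

/-- The uniform distribution on the cube `[0,1]^d`. -/
def uniformCube (d : ℕ) : Measure (Fin d → ℝ) :=
  volume.restrict (Set.univ.pi fun _ => Set.Icc (0 : ℝ) 1)

local notation "⟪" x ", " y "⟫" => @inner ℝ _ _ x y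

abbrev Euc (d : ℕ) := EuclideanSpace ℝ (Fin d)
def toE {d : ℕ} : (Fin d → ℝ) → Euc d := (WithLp.equiv 2 _).symm
def fromE {d : ℕ} : Euc d → (Fin d → ℝ) := WithLp.equiv 2 _
variable {d : ℕ}
lemma toE_fromE (v : Euc d) : toE (fromE v) = v := rfl
lemma euclDist_eq (x y : Fin d → ℝ) : euclDist x y = ‖toE x - toE y‖ := by
  rw [EuclideanSpace.norm_eq, euclDist]
  simp [toE, WithLp.equiv_symm_apply, sq_abs]

lemma isProj_eq (S : Set (Fin d → ℝ)) (D : Submodule ℝ (Euc d)) (a : Fin d → ℝ)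
    (hS : ∀ y, y ∈ S ↔ toE y - toE a ∈ D) (P : (Fin d → ℝ) → (Fin d → ℝ))
    (hP : IsProjOn P S) (w : Fin d → ℝ) :
    toE (P w) = toE a + (D.subtypeL ∘L D.orthogonalProjectionOnto) (toE w - toE a) := by
  set Q := D.subtypeL ∘L D.orthogonalProjectionOnto with hQ
  set p : Euc d := toE a + Q (toE w - toE a) with hp
  have hpS : fromE p ∈ S := by
    rw [hS]
    have : toE (fromE p) - toE a = Q (toE w - toE a) := by
      rw [toE_fromE, hp]; abel
    rw [this]
    exact (D.orthogonalProjectionOnto (toE w - toE a)).2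
  have hperp : toE w - p ∈ Dᗮ := by
    have : toE w - p = (toE w - toE a) - Q (toE w - toE a) := by rw [hp]; abel
    rw [this]
    exact Submodule.sub_starProjection_mem_orthogonal (K := D) _
  -- Pythagoras for y in S
  have pyth : ∀ y ∈ S, ‖toE w - toE y‖ ^ 2 = ‖toE w - p‖ ^ 2 + ‖p - toE y‖ ^ 2 := by
    intro y hy
    have hmem : p - toE y ∈ D := by
      have h1 : toE y - toE a ∈ D := (hS y).1 hy
      have h2 : Q (toE w - toE a) ∈ D := (D.orthogonalProjectionOnto (toE w - toE a)).2
      have : p - toE y = Q (toE w - toE a) - (toE y - toE a) := by rw [hp]; abel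
      rw [this]; exact D.sub_mem h2 h1
    have hinner : ⟪toE w - p, p - toE y⟫ = 0 := by
      rw [real_inner_comm]; exact hperp _ hmem
    have : toE w - toE y = (toE w - p) + (p - toE y) := by abel
    rw [this, norm_add_sq_real, hinner]
    ring
  have h1 : euclDist w (P w) ≤ euclDist w (fromE p) := (hP w).2 _ hpS
  rw [euclDist_eq, euclDist_eq, toE_fromE] at h1
  have h2 := pyth (P w) (hP w).1
  have h3 : ‖toE w - toE (P w)‖ ^ 2 ≤ ‖toE w - p‖ ^ 2 := by
    apply pow_le_pow_left₀ (norm_nonneg _) h1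
  have h4 : ‖p - toE (P w)‖ ^ 2 ≤ 0 := by linarith
  have h5 : p - toE (P w) = 0 := by
    rw [← norm_eq_zero]
    nlinarith [norm_nonneg (p - toE (P w)), sq_nonneg ‖p - toE (P w)‖]
  exact (sub_eq_zero.mp h5).symm


variable {V : Type*} [NormedAddCommGroup V] [InnerProductSpace ℝ V]
variable {n : ℕ} (G : SimpleGraph (Fin n)) [DecidableRel G.Adj]

def wgt (ε : ℝ) (i j : Fin n) : ℝ :=
  if i = j then 1 - ε * G.degree i else if G.Adj i j then ε else 0

variable {G}

lemma wgt_symm (ε : ℝ) (i j : Fin n) : wgt G ε i j = wgt G ε j i := by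
  unfold wgt
  by_cases h : i = j
  · subst h; simp
  · rw [if_neg h, if_neg (Ne.symm h)]
    by_cases h2 : G.Adj i j
    · rw [if_pos h2, if_pos h2.symm]
    · rw [if_neg h2, if_neg (fun hc => h2 hc.symm)]

lemma wgt_diag_ge {ε : ℝ} (hε0 : 0 ≤ ε) (hεn : ε * n ≤ 1) (i : Fin n) :
    ε ≤ wgt G ε i i := by
  unfold wgt
  rw [if_pos rfl]
  have hdeg : (G.degree i : ℝ) ≤ (n : ℝ) - 1 := by
    have := G.degree_lt_card_verts i
    rw [Fintype.card_fin] at this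
    have : (G.degree i : ℝ) < n := by exact_mod_cast this
    have h2 : (G.degree i : ℝ) + 1 ≤ n := by
      have := G.degree_lt_card_verts i
      rw [Fintype.card_fin] at this
      exact_mod_cast Nat.succ_le_of_lt this
    linarith
  nlinarith

lemma wgt_nonneg {ε : ℝ} (hε0 : 0 ≤ ε) (hεn : ε * n ≤ 1) (i j : Fin n) :
    0 ≤ wgt G ε i j := by
  by_cases h : i = j
  · subst h; exact le_trans hε0 (wgt_diag_ge hε0 hεn i)
  · unfold wgt; rw [if_neg h]
    by_cases h2 : G.Adj i j
    · rw [if_pos h2]; exact hε0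
    · rw [if_neg h2]

lemma wgt_split (ε : ℝ) (i j : Fin n) :
    wgt G ε i j = (if i = j then 1 - ε * G.degree i else 0) + (if G.Adj i j then ε else 0) := by
  unfold wgt
  by_cases h : i = j
  · subst h; simp
  · rw [if_neg h, if_neg h, zero_add]

lemma sum_ite_adj (ε : ℝ) (i : Fin n) :
    ∑ j, (if G.Adj i j then ε else 0) = ε * G.degree i := by
  rw [Finset.sum_ite, Finset.sum_const, Finset.sum_const_zero, add_zero,
    SimpleGraph.degree]
  rw [SimpleGraph.neighborFinset_eq_filter]
  simp [mul_comm]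

lemma sum_wgt (ε : ℝ) (i : Fin n) : ∑ j, wgt G ε i j = 1 := by
  simp only [wgt_split, Finset.sum_add_distrib, sum_ite_adj]
  rw [Finset.sum_ite_eq univ i (fun _ => 1 - ε * G.degree i)]
  simp

lemma wgt_apply (ε : ℝ) (i : Fin n) (v : Fin n → V) :
    ∑ j, wgt G ε i j • v j = v i + ε • ∑ j ∈ G.neighborFinset i, (v j - v i) := by
  have split : ∀ j, wgt G ε i j • v j =
      (if i = j then (1 - ε * G.degree i) • v i else 0) +
      (if G.Adj i j then ε • v j else 0) := by
    intro j
    rw [wgt_split]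
    by_cases h : i = j
    · subst h
      simp [G.irrefl]
    · rw [if_neg h, if_neg h, zero_add, zero_add]
      by_cases h2 : G.Adj i j
      · rw [if_pos h2, if_pos h2]
      · rw [if_neg h2, if_neg h2, zero_smul]
  simp only [split, Finset.sum_add_distrib]
  rw [Finset.sum_ite_eq univ i (fun _ => (1 - ε * G.degree i) • v i), if_pos (Finset.mem_univ i)]
  have h2 : ∑ j, (if G.Adj i j then ε • v j else 0) = ε • ∑ j ∈ G.neighborFinset i, v j := by
    rw [Finset.sum_ite, Finset.sum_const_zero, add_zero, Finset.smul_sum,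
      SimpleGraph.neighborFinset_eq_filter]
  rw [h2, Finset.sum_sub_distrib, Finset.sum_const, smul_sub, SimpleGraph.degree, sub_smul,
    one_smul]
  rw [smul_comm ε (((G.neighborFinset i).card) : ℕ), ← Nat.cast_smul_eq_nsmul ℝ]
  rw [smul_smul, mul_comm]
  abel

lemma row_identity {ι : Type*} [Fintype ι] (w : ι → ℝ) (hsum : ∑ j, w j = 1) (u : ι → V) :
    ‖∑ j, w j • u j‖ ^ 2 = ∑ j, w j * ‖u j‖ ^ 2
      - (1/2) * ∑ j, ∑ k, w j * w k * ‖u j - u k‖ ^ 2 := by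
  have hnorm : ‖∑ j, w j • u j‖ ^ 2 = ∑ j, ∑ k, w j * w k * ⟪u j, u k⟫ := by
    rw [← real_inner_self_eq_norm_sq, sum_inner]
    apply Finset.sum_congr rfl
    intro j _
    rw [inner_sum]
    apply Finset.sum_congr rfl
    intro k _
    rw [real_inner_smul_left, real_inner_smul_right]
    ring
  have hexp : ∀ j k : ι, w j * w k * ‖u j - u k‖ ^ 2 =
      w j * w k * ‖u j‖ ^ 2 + w j * w k * ‖u k‖ ^ 2 - 2 * (w j * w k * ⟪u j, u k⟫) := by
    intro j k
    rw [norm_sub_sq_real]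
    ring
  have a1 : ∀ j, ∑ k, w j * w k * ‖u j‖ ^ 2 = w j * ‖u j‖ ^ 2 := by
    intro j
    have : ∀ k, w j * w k * ‖u j‖ ^ 2 = w k * (w j * ‖u j‖ ^ 2) := fun k => by ring
    simp only [this]
    rw [← Finset.sum_mul, hsum, one_mul]
  have a2 : ∀ j, ∑ k, w j * w k * ‖u k‖ ^ 2 = w j * ∑ k, w k * ‖u k‖ ^ 2 := by
    intro j
    rw [Finset.mul_sum]
    apply Finset.sum_congr rfl
    intro k _
    ring
  have e3 : ∑ j, ∑ k, w j * w k * ‖u j - u k‖ ^ 2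
      = (∑ j, w j * ‖u j‖ ^ 2) + (∑ j, w j * ‖u j‖ ^ 2)
        - 2 * ∑ j, ∑ k, w j * w k * ⟪u j, u k⟫ := by
    simp only [hexp, Finset.sum_add_distrib, Finset.sum_sub_distrib]
    rw [Finset.sum_congr rfl (fun j _ => a1 j), Finset.sum_congr rfl (fun j _ => a2 j)]
    simp only [← Finset.mul_sum]
    rw [← Finset.sum_mul, hsum, one_mul]
  rw [hnorm, e3]
  ring

lemma W_bound {ε : ℝ} (hε0 : 0 ≤ ε) (hεn : ε * n ≤ 1) (v : Fin n → V) :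
    ∑ i, ‖∑ j, wgt G ε i j • v j‖ ^ 2
      + (ε ^ 2 / 2) * ∑ i, ∑ j ∈ G.neighborFinset i, ‖v i - v j‖ ^ 2
      ≤ ∑ i, ‖v i‖ ^ 2 := by
  have col : ∀ j : Fin n, ∑ i, wgt G ε i j = 1 := by
    intro j
    rw [Finset.sum_congr rfl (fun i _ => wgt_symm ε i j), sum_wgt]
  have key : ∀ i : Fin n, ‖∑ j, wgt G ε i j • v j‖ ^ 2
      + (ε ^ 2 / 2) * ∑ j ∈ G.neighborFinset i, ‖v i - v j‖ ^ 2
      ≤ ∑ j, wgt G ε i j * ‖v j‖ ^ 2 := by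
    intro i
    rw [row_identity (fun j => wgt G ε i j) (sum_wgt ε i) v]
    have hdrop : ∑ j ∈ G.neighborFinset i, (ε ^ 2) * ‖v i - v j‖ ^ 2
        ≤ ∑ j, ∑ k, wgt G ε i j * wgt G ε i k * ‖v j - v k‖ ^ 2 := by
      have step1 : ∑ k, wgt G ε i i * wgt G ε i k * ‖v i - v k‖ ^ 2
          ≤ ∑ j, ∑ k, wgt G ε i j * wgt G ε i k * ‖v j - v k‖ ^ 2 := by
        apply Finset.single_le_sum (f := fun j => ∑ k, wgt G ε i j * wgt G ε i k * ‖v j - v k‖ ^ 2)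
          (fun j _ => Finset.sum_nonneg fun k _ =>
            mul_nonneg (mul_nonneg (wgt_nonneg hε0 hεn i j) (wgt_nonneg hε0 hεn i k))
              (sq_nonneg _)) (Finset.mem_univ i)
      have step2 : ∑ j ∈ G.neighborFinset i, (ε ^ 2) * ‖v i - v j‖ ^ 2
          ≤ ∑ k, wgt G ε i i * wgt G ε i k * ‖v i - v k‖ ^ 2 := by
        have t1 : ∑ j ∈ G.neighborFinset i, (ε ^ 2) * ‖v i - v j‖ ^ 2
            ≤ ∑ k ∈ G.neighborFinset i, wgt G ε i i * wgt G ε i k * ‖v i - v k‖ ^ 2 := by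
          apply Finset.sum_le_sum
          intro k hk
          have hadj : G.Adj i k := (SimpleGraph.mem_neighborFinset _ _ _).1 hk
          have hne : i ≠ k := hadj.ne
          have hwk : wgt G ε i k = ε := by unfold wgt; rw [if_neg hne, if_pos hadj]
          have hub := wgt_diag_ge (G := G) hε0 hεn i
          rw [hwk]
          have hq : 0 ≤ ‖v i - v k‖ ^ 2 := sq_nonneg _
          nlinarith [mul_nonneg (mul_nonneg (sub_nonneg.mpr hub) hε0) hq]
        refine t1.trans (Finset.sum_le_sum_of_subset_of_nonneg (Finset.subset_univ _) ?_)
        intro k _ _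
        exact mul_nonneg (mul_nonneg (wgt_nonneg hε0 hεn i i) (wgt_nonneg hε0 hεn i k))
          (sq_nonneg _)
      exact le_trans step2 step1
    rw [← Finset.mul_sum] at hdrop
    linarith
  have colsum : ∑ i, ∑ j, wgt G ε i j * ‖v j‖ ^ 2 = ∑ j, ‖v j‖ ^ 2 := by
    rw [Finset.sum_comm]
    apply Finset.sum_congr rfl
    intro j _
    rw [← Finset.sum_mul, col j, one_mul]
  calc ∑ i, ‖∑ j, wgt G ε i j • v j‖ ^ 2
      + (ε ^ 2 / 2) * ∑ i, ∑ j ∈ G.neighborFinset i, ‖v i - v j‖ ^ 2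
      = ∑ i, (‖∑ j, wgt G ε i j • v j‖ ^ 2
        + (ε ^ 2 / 2) * ∑ j ∈ G.neighborFinset i, ‖v i - v j‖ ^ 2) := by
        rw [Finset.sum_add_distrib, Finset.mul_sum]
    _ ≤ ∑ i, ∑ j, wgt G ε i j * ‖v j‖ ^ 2 := Finset.sum_le_sum (fun i _ => key i)
    _ = ∑ j, ‖v j‖ ^ 2 := colsum

omit [NormedAddCommGroup V] [InnerProductSpace ℝ V] [DecidableRel G.Adj] in
lemma consensus_of_edge (hG : G.Connected) (v : Fin n → V)
    (h : ∀ i j, G.Adj i j → v i = v j) : ∀ i j, v i = v j := by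
  intro i j
  obtain ⟨p⟩ := hG.preconnected i j
  induction p with
  | nil => rfl
  | cons hadj _ ih => exact (h _ _ hadj).trans ih


lemma converge_abstract {E : Type*} [NormedAddCommGroup E] [InnerProductSpace ℝ E]
    [FiniteDimensional ℝ E] (M : E →ₗ[ℝ] E)
    (hle : ∀ v, ‖M v‖ ≤ ‖v‖) (heq : ∀ v, ‖M v‖ = ‖v‖ → M v = v)
    (c : E) (hc : ∀ f, M f = f → ⟪f, c⟫ = 0)
    (hMF : ∀ u f, M f = f → ⟪M u, f⟫ = ⟪u, f⟫)
    (x : ℕ → E) (hx : ∀ t, x (t + 1) = c + M (x t)) :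
    ∃ xinf, M xinf + c = xinf ∧ Tendsto x atTop (nhds xinf) := by
  set F : Submodule ℝ E := LinearMap.ker (M - LinearMap.id) with hF
  have hFmem : ∀ v, v ∈ F ↔ M v = v := by
    intro v
    simp [hF, LinearMap.mem_ker, LinearMap.sub_apply, sub_eq_zero]
  have hcF : c ∈ Fᗮ := by
    intro f hf
    exact hc f ((hFmem f).1 hf)
  have hMinv : ∀ u ∈ Fᗮ, M u ∈ Fᗮ := by
    intro u hu f hf
    rw [real_inner_comm, hMF u f ((hFmem f).1 hf), real_inner_comm]
    exact hu f hf
  have hFinfbot : ∀ v, v ∈ F → v ∈ Fᗮ → v = 0 := by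
    intro v h1 h2
    have : ⟪v, v⟫ = 0 := h2 v h1
    exact inner_self_eq_zero.mp this
  -- surjectivity of (id - M) on Fᗮ
  have hinv2 : ∀ u ∈ Fᗮ, (LinearMap.id - M : E →ₗ[ℝ] E) u ∈ Fᗮ := by
    intro u hu
    simp only [LinearMap.sub_apply, LinearMap.id_apply]
    exact Submodule.sub_mem _ hu (hMinv u hu)
  set g : ↥Fᗮ →ₗ[ℝ] ↥Fᗮ := (LinearMap.id - M : E →ₗ[ℝ] E).restrict hinv2 with hg
  have hginj : Function.Injective g := by
    rw [← LinearMap.ker_eq_bot]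
    rw [Submodule.eq_bot_iff]
    intro u hu
    have h0 : ((g u : E)) = 0 := by
      rw [LinearMap.mem_ker] at hu
      rw [hu]; rfl
    rw [LinearMap.restrict_apply] at h0
    simp only [LinearMap.sub_apply, LinearMap.id_apply] at h0
    have hMu : M (u : E) = u := (sub_eq_zero.mp h0).symm
    have : (u : E) ∈ F := (hFmem _).2 hMu
    have : (u : E) = 0 := hFinfbot _ this u.2
    exact Subtype.ext this
  have hgsurj : Function.Surjective g := (LinearMap.injective_iff_surjective).mp hginj
  obtain ⟨u, hu⟩ := hgsurj ⟨c, hcF⟩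
  have hustar : (u : E) - M u = c := by
    have := congrArg (Subtype.val) hu
    rw [LinearMap.restrict_apply] at this
    simpa using this
  set xstar : E := (u : E) with hxstar
  have hfix : M xstar + c = xstar := by rw [← hustar]; abel
  -- decompose x 0 - xstar
  obtain ⟨p, hpF, q0, hq0, hdecomp⟩ := F.exists_add_mem_mem_orthogonal (x 0 - xstar)
  have hMp : M p = p := (hFmem p).1 hpF
  -- iterates
  have hqF : ∀ t, (fun v => M v)^[t] q0 ∈ Fᗮ := by
    intro t
    induction t with
    | zero => exact hq0
    | succ t ih => rw [Function.iterate_succ_apply']; exact hMinv _ ih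
  have hxt : ∀ t, x t = (xstar + p) + (fun v => M v)^[t] q0 := by
    intro t
    induction t with
    | zero =>
      simp only [Function.iterate_zero, id_eq]
      have h := hdecomp
      rw [sub_eq_iff_eq_add] at h
      rw [h]; abel
    | succ t ih =>
      rw [hx t, ih, Function.iterate_succ_apply']
      simp only [_root_.map_add, hMp]
      calc c + (M xstar + p + M ((fun v => M v)^[t] q0))
          = (M xstar + c) + p + M ((fun v => M v)^[t] q0) := by abel
        _ = xstar + p + M ((fun v => M v)^[t] q0) := by rw [hfix]
  -- contraction rate on Fᗮ
  obtain ⟨r, hr0, hr1, hrb⟩ : ∃ r : ℝ, 0 ≤ r ∧ r < 1 ∧ ∀ u ∈ Fᗮ, ‖M u‖ ≤ r * ‖u‖ := by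
    by_cases hbot : Fᗮ = ⊥
    · refine ⟨0, le_refl _, one_pos, ?_⟩
      intro u hu
      rw [hbot, Submodule.mem_bot] at hu
      simp [hu]
    · obtain ⟨u0, hu0F, hu0ne⟩ := Submodule.exists_mem_ne_zero_of_ne_bot hbot
      set K : Set E := Metric.sphere (0 : E) 1 ∩ (Fᗮ : Set E) with hK
      have hKc : IsCompact K :=
        (isCompact_sphere (0 : E) 1).inter_right (Submodule.closed_of_finiteDimensional Fᗮ)
      have hKne : K.Nonempty := by
        refine ⟨‖u0‖⁻¹ • u0, ?_, Submodule.smul_mem _ _ hu0F⟩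
        simp [norm_smul, norm_ne_zero_iff.mpr hu0ne, inv_mul_cancel₀]
      have hcont : ContinuousOn (fun v => ‖M v‖) K :=
        (M.continuous_of_finiteDimensional.norm).continuousOn
      obtain ⟨u1, hu1K, hmax⟩ := hKc.exists_isMaxOn hKne hcont
      have hu1n : ‖u1‖ = 1 := by
        have := hu1K.1
        simpa using this
      refine ⟨‖M u1‖, norm_nonneg _, ?_, ?_⟩
      · rcases lt_or_eq_of_le (le_of_le_of_eq (hle u1) hu1n) with h | h
        · exact h
        · exfalso
          have hMu1 : M u1 = u1 := heq u1 (by rw [h, hu1n])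
          have : u1 = 0 := hFinfbot u1 ((hFmem u1).2 hMu1) hu1K.2
          rw [this] at hu1n; simp at hu1n
      · intro v hv
        by_cases hv0 : v = 0
        · simp [hv0]
        · have hw : ‖v‖⁻¹ • v ∈ K :=
            ⟨by simp [norm_smul, norm_ne_zero_iff.mpr hv0, inv_mul_cancel₀], Submodule.smul_mem _ _ hv⟩
          have := hmax hw
          simp only [Set.mem_setOf_eq] at this
          rw [_root_.map_smul, norm_smul] at this
          have hvn : 0 < ‖v‖ := norm_pos_iff.mpr hv0
          rw [norm_inv, norm_norm] at this
          calc ‖M v‖ = ‖v‖ * (‖v‖⁻¹ * ‖M v‖) := by field_simp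
          _ ≤ ‖v‖ * ‖M u1‖ := by
              apply mul_le_mul_of_nonneg_left this (le_of_lt hvn)
          _ = ‖M u1‖ * ‖v‖ := mul_comm _ _
  have hdecay : ∀ t, ‖(fun v => M v)^[t] q0‖ ≤ r ^ t * ‖q0‖ := by
    intro t
    induction t with
    | zero => simp
    | succ t ih =>
      rw [Function.iterate_succ_apply', pow_succ]
      calc ‖M ((fun v => M v)^[t] q0)‖ ≤ r * ‖(fun v => M v)^[t] q0‖ := hrb _ (hqF t)
      _ ≤ r * (r ^ t * ‖q0‖) := by apply mul_le_mul_of_nonneg_left ih hr0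
      _ = r ^ t * r * ‖q0‖ := by ring
  refine ⟨xstar + p, ?_, ?_⟩
  · rw [_root_.map_add, hMp, ← hustar]; abel
  · have hzero : Tendsto (fun t => (fun v => M v)^[t] q0) atTop (nhds 0) := by
      apply squeeze_zero_norm hdecay
      have := (tendsto_pow_atTop_nhds_zero_of_lt_one hr0 hr1).mul_const ‖q0‖
      simpa using this
    have hconst : Tendsto (fun _ : ℕ => xstar + p) atTop (nhds (xstar + p)) := tendsto_const_nhds
    have := hconst.add hzero
    rw [add_zero] at this
    apply this.congr
    intro t
    rw [hxt t]


abbrev Stk (n d : ℕ) := PiLp 2 (fun _ : Fin n => Euc d)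

def Qop {d : ℕ} (D : Submodule ℝ (Euc d)) : Euc d →L[ℝ] Euc d :=
  D.subtypeL ∘L D.orthogonalProjectionOnto

lemma Qop_mem {d : ℕ} (D : Submodule ℝ (Euc d)) (u : Euc d) : Qop D u ∈ D :=
  (D.orthogonalProjectionOnto u).2

lemma Qop_fix {d : ℕ} (D : Submodule ℝ (Euc d)) (u : Euc d) (hu : u ∈ D) : Qop D u = u := by
  unfold Qop
  simp only [ContinuousLinearMap.comp_apply, Submodule.subtypeL_apply]
  exact (Submodule.starProjection_eq_self_iff (K := D)).mpr hu

lemma Qop_pyth {d : ℕ} (D : Submodule ℝ (Euc d)) (u : Euc d) :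
    ‖u‖ ^ 2 = ‖Qop D u‖ ^ 2 + ‖u - Qop D u‖ ^ 2 := by
  have hmem : u - Qop D u ∈ Dᗮ := Submodule.sub_starProjection_mem_orthogonal (K := D) u
  have hinner : ⟪Qop D u, u - Qop D u⟫ = 0 := hmem _ (Qop_mem D u)
  have : u = Qop D u + (u - Qop D u) := by abel
  nth_rewrite 1 [this]
  rw [norm_add_sq_real, hinner]
  ring

lemma Qop_norm_le {d : ℕ} (D : Submodule ℝ (Euc d)) (u : Euc d) : ‖Qop D u‖ ≤ ‖u‖ := by
  have := Qop_pyth D u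
  nlinarith [norm_nonneg (Qop D u), norm_nonneg u, sq_nonneg ‖u - Qop D u‖]

lemma Qop_norm_eq {d : ℕ} (D : Submodule ℝ (Euc d)) (u : Euc d) (h : ‖Qop D u‖ = ‖u‖) :
    Qop D u = u := by
  have := Qop_pyth D u
  rw [← h] at this
  have h2 : ‖u - Qop D u‖ ^ 2 = 0 := by linarith
  have : u - Qop D u = 0 := by
    rw [← norm_eq_zero]
    nlinarith [norm_nonneg (u - Qop D u)]
  rw [← sub_eq_zero]
  rw [← neg_sub]
  simp [this]

lemma Qop_symm {d : ℕ} (D : Submodule ℝ (Euc d)) (u w : Euc d) :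
    ⟪Qop D u, w⟫ = ⟪u, Qop D w⟫ :=
  Submodule.starProjection_isSymmetric D u w

variable {n : ℕ} {dd : ℕ}

def Mop (G : SimpleGraph (Fin n)) [DecidableRel G.Adj] (ε : ℝ)
    (D : Fin n → Submodule ℝ (Euc dd)) : Stk n dd →ₗ[ℝ] Stk n dd where
  toFun v := (WithLp.equiv 2 _).symm (fun i => Qop (D i) (∑ j, wgt G ε i j • v j))
  map_add' v w := by
    apply PiLp.ext
    intro i
    show Qop (D _) (∑ j, wgt G ε _ j • (v + w) j) = _
    have : ∀ j, (v + w) j = v j + w j := fun _ => rfl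
    simp only [this, smul_add, Finset.sum_add_distrib, _root_.map_add]
    rfl
  map_smul' r v := by
    apply PiLp.ext
    intro i
    show Qop (D _) (∑ j, wgt G ε _ j • (r • v) j) = _
    have : ∀ j, (r • v) j = r • v j := fun _ => rfl
    simp only [this, smul_comm _ r, ← Finset.smul_sum, _root_.map_smul]
    rfl

lemma Mop_apply (G : SimpleGraph (Fin n)) [DecidableRel G.Adj] (ε : ℝ)
    (D : Fin n → Submodule ℝ (Euc dd)) (v : Stk n dd) (i : Fin n) :
    Mop G ε D v i = Qop (D i) (∑ j, wgt G ε i j • v j) := rfl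

lemma consensus_row {V : Type*} [AddCommGroup V] [Module ℝ V]
    {G : SimpleGraph (Fin n)} [DecidableRel G.Adj] (ε : ℝ)
    (v : Fin n → V) (hcons : ∀ i j, v i = v j) (i : Fin n) :
    ∑ j, wgt G ε i j • v j = v i := by
  have h : ∀ j, wgt G ε i j • v j = wgt G ε i j • v i := fun j => by rw [hcons j i]
  rw [Finset.sum_congr rfl (fun j _ => h j), ← Finset.sum_smul, sum_wgt, one_smul]

variable {G : SimpleGraph (Fin n)} [DecidableRel G.Adj] {ε : ℝ}
  {D : Fin n → Submodule ℝ (Euc dd)}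

lemma Mop_norm_bound (hε0 : 0 ≤ ε) (hεn : ε * n ≤ 1) (v : Stk n dd) :
    ‖Mop G ε D v‖ ^ 2 + (ε ^ 2 / 2) * ∑ i, ∑ j ∈ G.neighborFinset i, ‖v i - v j‖ ^ 2
      ≤ ‖v‖ ^ 2 := by
  rw [PiLp.norm_sq_eq_of_L2, PiLp.norm_sq_eq_of_L2]
  have h1 : ∀ i ∈ univ, ‖Mop G ε D v i‖ ^ 2 ≤ ‖∑ j, wgt G ε i j • v j‖ ^ 2 := fun i _ => by
    rw [Mop_apply]
    exact pow_le_pow_left₀ (norm_nonneg _) (Qop_norm_le _ _) 2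
  have h2 := W_bound (G := G) hε0 hεn (fun j => v j)
  have h3 := Finset.sum_le_sum h1
  calc (∑ i, ‖Mop G ε D v i‖ ^ 2)
        + (ε ^ 2 / 2) * ∑ i, ∑ j ∈ G.neighborFinset i, ‖v i - v j‖ ^ 2
      ≤ (∑ i, ‖∑ j, wgt G ε i j • v j‖ ^ 2)
        + (ε ^ 2 / 2) * ∑ i, ∑ j ∈ G.neighborFinset i, ‖v i - v j‖ ^ 2 := by linarith
    _ ≤ ∑ i, ‖v i‖ ^ 2 := h2

lemma edge_sum_nonneg (v : Stk n dd) :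
    0 ≤ ∑ i, ∑ j ∈ G.neighborFinset i, ‖v i - v j‖ ^ 2 :=
  Finset.sum_nonneg fun i _ => Finset.sum_nonneg fun j _ => sq_nonneg _

lemma Mop_norm_le (hε0 : 0 ≤ ε) (hεn : ε * n ≤ 1) (v : Stk n dd) :
    ‖Mop G ε D v‖ ≤ ‖v‖ := by
  have h1 := Mop_norm_bound (G := G) (D := D) hε0 hεn v
  have h2 := edge_sum_nonneg (G := G) v
  have h3 : ‖Mop G ε D v‖ ^ 2 ≤ ‖v‖ ^ 2 := by nlinarith
  nlinarith [norm_nonneg (Mop G ε D v), norm_nonneg v]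

lemma Mop_fix_of_norm_eq (hG : G.Connected) (hε0 : 0 < ε) (hεn : ε * n ≤ 1)
    (v : Stk n dd) (h : ‖Mop G ε D v‖ = ‖v‖) :
    (∀ i j, v i = v j) ∧ Mop G ε D v = v := by
  have hb := Mop_norm_bound (G := G) (D := D) hε0.le hεn v
  have hT : ∑ i, ∑ j ∈ G.neighborFinset i, ‖v i - v j‖ ^ 2 = 0 := by
    have h2 := edge_sum_nonneg (G := G) v
    have h3 : ‖Mop G ε D v‖ ^ 2 = ‖v‖ ^ 2 := by rw [h]
    have h4 : (ε ^ 2 / 2) * ∑ i, ∑ j ∈ G.neighborFinset i, ‖v i - v j‖ ^ 2 ≤ 0 := by linarith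
    have h5 : 0 < ε ^ 2 / 2 := by positivity
    nlinarith
  have hedge : ∀ i j, G.Adj i j → v i = v j := by
    intro i j hadj
    have h1 := (Finset.sum_eq_zero_iff_of_nonneg
      (fun i _ => Finset.sum_nonneg fun j _ => sq_nonneg (‖v i - v j‖))).1 hT i (Finset.mem_univ i)
    have h2 := (Finset.sum_eq_zero_iff_of_nonneg (fun j _ => sq_nonneg (‖v i - v j‖))).1 h1 j
      ((SimpleGraph.mem_neighborFinset _ _ _).2 hadj)
    have : v i - v j = 0 := by
      rw [← norm_eq_zero]
      exact pow_eq_zero_iff two_ne_zero |>.1 h2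
    exact sub_eq_zero.mp this
  have hcons : ∀ i j, v i = v j := consensus_of_edge hG (fun i => v i) hedge
  refine ⟨hcons, ?_⟩
  have hrow : ∀ i, ∑ j, wgt G ε i j • v j = v i := consensus_row ε (fun j => v j) hcons
  have hsum_eq : ∑ i, ‖Qop (D i) (v i)‖ ^ 2 = ∑ i, ‖v i‖ ^ 2 := by
    have e1 : ‖Mop G ε D v‖ ^ 2 = ∑ i, ‖Qop (D i) (v i)‖ ^ 2 := by
      rw [PiLp.norm_sq_eq_of_L2]
      exact Finset.sum_congr rfl fun i _ => by rw [Mop_apply, hrow i]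
    have e2 : ‖v‖ ^ 2 = ∑ i, ‖v i‖ ^ 2 := PiLp.norm_sq_eq_of_L2 _ _
    rw [← e1, ← e2, h]
  have hterm : ∀ i ∈ univ, ‖Qop (D i) (v i)‖ ^ 2 = ‖v i‖ ^ 2 :=
    (Finset.sum_eq_sum_iff_of_le fun i _ =>
      pow_le_pow_left₀ (norm_nonneg _) (Qop_norm_le _ _) 2).1 hsum_eq
  refine PiLp.ext fun i => ?_
  rw [Mop_apply, hrow i]
  apply Qop_norm_eq
  have := hterm i (Finset.mem_univ i)
  nlinarith [norm_nonneg (Qop (D i) (v i)), norm_nonneg (v i)]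

lemma Mop_inner (u f : Stk n dd) (hcons : ∀ i j, f i = f j)
    (hQf : ∀ i, Qop (D i) (f i) = f i) :
    ⟪Mop G ε D u, f⟫ = ⟪u, f⟫ := by
  have col : ∀ j : Fin n, ∑ i, wgt G ε i j = 1 := by
    intro j
    rw [Finset.sum_congr rfl (fun i _ => wgt_symm ε i j), sum_wgt]
  rw [PiLp.inner_apply, PiLp.inner_apply]
  have e1 : ∀ i, ⟪Mop G ε D u i, f i⟫ = ∑ j, wgt G ε i j * ⟪u j, f i⟫ := by
    intro i
    rw [Mop_apply, Qop_symm, hQf i, sum_inner]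
    exact Finset.sum_congr rfl fun j _ => real_inner_smul_left _ _ _
  rw [Finset.sum_congr rfl fun i _ => e1 i, Finset.sum_comm]
  apply Finset.sum_congr rfl
  intro j _
  have : ∀ i, wgt G ε i j * ⟪u j, f i⟫ = wgt G ε i j * ⟪u j, f j⟫ := fun i => by
    rw [hcons i j]
  rw [Finset.sum_congr rfl fun i _ => this i, ← Finset.sum_mul, col, one_mul]

theorem stmt16 (n d k : ℕ) (hn : 0 < n)
    (G : SimpleGraph (Fin n)) [DecidableRel G.Adj] (hG : G.Connected)
    (H : Fin n → Matrix (Fin k) (Fin d) ℝ) (z : Fin n → Fin k → ℝ)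
    (E : Fin n → Set (Fin d → ℝ))
    (hE : ∀ i, E i = {y | (H i).mulVec y = z i})
    (hEne : ∀ i, (E i).Nonempty)
    (hInt : ⋂ i, E i = ∅)
    (P : Fin n → (Fin d → ℝ) → (Fin d → ℝ))
    (hP : ∀ i, IsProjOn (P i) (E i))
    (ε : ℝ) (hε0 : 0 < ε) (hε1 : ε < 1 / n)
    (x : ℕ → Fin n → Fin d → ℝ)
    (hx : ∀ t i, x (t + 1) i =
      P i (x t i + ε • ∑ j ∈ G.neighborFinset i, (x t j - x t i))) :
    ∃ ystar : Fin n → Fin d → ℝ,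
      (∀ i, Filter.Tendsto (fun t => x t i) Filter.atTop (nhds (ystar i))) ∧
      ∃ j k : Fin n, ystar j ≠ ystar k := by
  classical
  choose a ha using hEne
  set D : Fin n → Submodule ℝ (Euc d) := fun i =>
    LinearMap.ker ((H i).mulVecLin ∘ₗ (WithLp.linearEquiv 2 ℝ (Fin d → ℝ)).toLinearMap) with hD
  have hmemD : ∀ (i : Fin n) (u : Euc d), u ∈ D i ↔ (H i).mulVec (fromE u) = 0 := by
    intro i u
    rw [hD, LinearMap.mem_ker, LinearMap.comp_apply, Matrix.mulVecLin_apply]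
    rfl
  have hmemE : ∀ i y, y ∈ E i ↔ toE y - toE (a i) ∈ D i := by
    intro i y
    rw [hE i, Set.mem_setOf_eq, hmemD]
    have hfa : fromE (toE y - toE (a i)) = y - a i := rfl
    rw [hfa, Matrix.mulVec_sub]
    have haz : (H i).mulVec (a i) = z i := by
      have := ha i; rw [hE i] at this; exact this
    rw [haz, sub_eq_zero]
  have hProj : ∀ i w, toE (P i w) = toE (a i) + Qop (D i) (toE w - toE (a i)) :=
    fun i w => isProj_eq (E i) (D i) (a i) (hmemE i) (P i) (hP i) w
  set X : ℕ → Stk n d := fun t => (WithLp.equiv 2 _).symm (fun i => toE (x t i)) with hX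
  have hXapp : ∀ t i, X t i = toE (x t i) := fun _ _ => rfl
  set c : Stk n d := (WithLp.equiv 2 _).symm
    (fun i => toE (a i) - Qop (D i) (toE (a i))) with hc
  have hcapp : ∀ i, c i = toE (a i) - Qop (D i) (toE (a i)) := fun _ => rfl
  have hεn : ε * n ≤ 1 := by
    have hn' : (0:ℝ) < n := by exact_mod_cast hn
    rw [lt_div_iff₀ hn'] at hε1
    exact hε1.le
  have hrec : ∀ t, X (t + 1) = c + Mop G ε D (X t) := by
    intro t
    apply PiLp.ext
    intro i
    show X (t+1) i = c i + Mop G ε D (X t) i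
    rw [hXapp, hx t i, hProj i _, Mop_apply, hcapp]
    have hv : toE (x t i + ε • ∑ j ∈ G.neighborFinset i, (x t j - x t i))
        = ∑ j, wgt G ε i j • (X t j) := by
      rw [wgt_apply]
      simp only [hXapp, toE, WithLp.equiv_symm_apply, WithLp.toLp_add, WithLp.toLp_smul,
        WithLp.toLp_sum, WithLp.toLp_sub]
    rw [hv, _root_.map_sub]
    abel
  -- hypotheses of converge_abstract
  have hle : ∀ v, ‖Mop G ε D v‖ ≤ ‖v‖ := fun v => Mop_norm_le hε0.le hεn v
  have heqv : ∀ v, ‖Mop G ε D v‖ = ‖v‖ → Mop G ε D v = v :=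
    fun v hv => (Mop_fix_of_norm_eq hG hε0 hεn v hv).2
  have hfixprop : ∀ f : Stk n d, Mop G ε D f = f →
      (∀ i j, f i = f j) ∧ ∀ i, Qop (D i) (f i) = f i := by
    intro f hf
    have hnf : ‖Mop G ε D f‖ = ‖f‖ := by rw [hf]
    obtain ⟨hcons, -⟩ := Mop_fix_of_norm_eq hG hε0 hεn f hnf
    refine ⟨hcons, fun i => ?_⟩
    have h1 : Mop G ε D f i = f i := by rw [hf]
    rwa [Mop_apply, consensus_row ε (fun j => f j) hcons i] at h1
  have hMF : ∀ u f : Stk n d, Mop G ε D f = f → ⟪Mop G ε D u, f⟫ = ⟪u, f⟫ := by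
    intro u f hf
    obtain ⟨hcons, hQf⟩ := hfixprop f hf
    exact Mop_inner u f hcons hQf
  have hcperp : ∀ f : Stk n d, Mop G ε D f = f → ⟪f, c⟫ = 0 := by
    intro f hf
    obtain ⟨hcons, hQf⟩ := hfixprop f hf
    rw [PiLp.inner_apply]
    apply Finset.sum_eq_zero
    intro i _
    have hfm : f i ∈ D i := by
      rw [← hQf i]; exact Qop_mem _ _
    have hcm : c i ∈ (D i)ᗮ := by
      rw [hcapp]
      exact Submodule.sub_starProjection_mem_orthogonal (K := D i) (toE (a i))
    exact hcm _ hfm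
  obtain ⟨xinf, hfixinf, htend⟩ :=
    converge_abstract (Mop G ε D) hle heqv c hcperp hMF X hrec
  refine ⟨fun i => fromE (xinf i), ?_, ?_⟩
  · intro i
    have h1 : Continuous (fun v : Stk n d => fromE (v i)) := by
      apply (PiLp.continuous_ofLp (p := 2) (β := fun _ : Fin d => ℝ)).comp
      exact (continuous_apply i).comp (PiLp.continuous_ofLp (p := 2) (β := fun _ : Fin n => Euc d))
    exact (h1.tendsto xinf).comp htend
  · by_contra hcon
    push_neg at hcon
    have hconsinf : ∀ i j, xinf i = xinf j := by
      intro i j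
      have h2 := hcon i j
      have := congrArg toE h2
      exact this
    -- xinf is a fixed point: Mop xinf + c = xinf
    have hmemall : ∀ i, fromE (xinf ⟨0, hn⟩) ∈ E i := by
      intro i
      rw [hmemE i]
      have hcoord : Mop G ε D xinf i + c i = xinf i := congrFun (congrArg WithLp.ofLp hfixinf) i
      rw [Mop_apply, consensus_row ε (fun j => xinf j) hconsinf i, hcapp] at hcoord
      have h2 : xinf i - toE (a i) = Qop (D i) (xinf i) - Qop (D i) (toE (a i)) := by
        conv_lhs => rw [← hcoord]
        abel
      have hQ : Qop (D i) (xinf i - toE (a i)) = xinf i - toE (a i) := by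
        rw [_root_.map_sub]
        exact h2.symm
      have hmem : xinf i - toE (a i) ∈ D i := by
        rw [← hQ]; exact Qop_mem _ _
      have : toE (fromE (xinf ⟨0, hn⟩)) = xinf i := by
        rw [toE_fromE, hconsinf ⟨0, hn⟩ i]
      rw [this]
      exact hmem
    have : fromE (xinf ⟨0, hn⟩) ∈ ⋂ i, E i := Set.mem_iInter.mpr hmemall
    rw [hInt] at this
    exact this
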